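/- Under the hypotheses of the previous statement (quadratic eigenpair (λ₁, x₁), projected matrices M̂, D̂, K̂, q̂₁ = Qᴴx₁/‖Qᴴx₁‖), there exist perturbation matrices E_M, E_D, E_K ∈ ℂ^{m×m} with ‖E_M‖ ≤ (1/3)(‖M‖ + ‖D‖/|λ₁| + ‖K‖/|λ₁|²) tan θ₁, ‖E_D‖ ≤ (1/3)(|λ₁|‖M‖ + ‖D‖ + ‖K‖/|λ₁|) tan θ₁, ‖E_K‖ ≤ (1/3)(|λ₁|²‖M‖ + |λ₁|‖D‖ + ‖K‖) tan θ₁, such that (λ₁²(M̂ + E_M) + λ₁(D̂ + E_D) + (K̂ + E_K)) q̂₁ = 0. -/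

import Mathlib

open Matrix Polynomial

/-- Euclidean norm of a complex vector. -/
noncomputable def vnorm {ι : Type*} [Fintype ι] (x : ι → ℂ) : ℝ :=
  Real.sqrt (∑ i, ‖x i‖ ^ 2)

/-- Spectral norm (operator 2-norm) of a complex matrix. -/
noncomputable def spec {ι κ : Type*} [Fintype ι] [Fintype κ] [DecidableEq κ]
    (A : Matrix ι κ ℂ) : ℝ :=
  ‖LinearMap.toContinuousLinearMap (Matrix.toEuclideanLin A)‖

/-- Sine of the angle between two vectors: distance from a/‖a‖ to span{b}. -/
noncomputable def sAngle {ι : Type*} [Fintype ι] (a b : ι → ℂ) : ℝ :=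
  ⨅ α : ℂ, vnorm ((vnorm a)⁻¹ • a - α • b)

section helpers
set_option linter.unusedSectionVars false
variable {ι κ : Type*} [Fintype ι] [Fintype κ] [DecidableEq ι] [DecidableEq κ]

lemma vnorm_eq (x : ι → ℂ) : vnorm x = ‖(WithLp.equiv 2 (ι → ℂ)).symm x‖ := by
  rw [EuclideanSpace.norm_eq, vnorm]; rfl

lemma vnorm_nonneg (x : ι → ℂ) : 0 ≤ vnorm x := Real.sqrt_nonneg _

lemma vnorm_smul (c : ℂ) (x : ι → ℂ) : vnorm (c • x) = ‖c‖ * vnorm x := by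
  rw [vnorm_eq, vnorm_eq, ← norm_smul]; rfl

lemma vnorm_neg (x : ι → ℂ) : vnorm (-x) = vnorm x := by
  rw [show -x = (-1 : ℂ) • x by ext i; simp, vnorm_smul]; simp

lemma vnorm_pos {x : ι → ℂ} (hx : x ≠ 0) : 0 < vnorm x := by
  rw [vnorm_eq]
  simpa using hx

lemma dot_self_eq (x : ι → ℂ) : star x ⬝ᵥ x = ((vnorm x : ℝ) : ℂ) ^ 2 := by
  have h1 : star x ⬝ᵥ x = ((∑ i, ‖x i‖ ^ 2 : ℝ) : ℂ) := by
    simp only [dotProduct, Pi.star_apply, Complex.ofReal_sum]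
    refine Finset.sum_congr rfl fun i _ => ?_
    rw [Complex.star_def, mul_comm, Complex.mul_conj, Complex.normSq_eq_norm_sq]
  rw [h1, vnorm]
  norm_cast
  rw [Real.sq_sqrt (Finset.sum_nonneg fun i _ => sq_nonneg _)]

lemma vnorm_sq (x : ι → ℂ) : vnorm x ^ 2 = ∑ i, ‖x i‖ ^ 2 := by
  rw [vnorm, Real.sq_sqrt (Finset.sum_nonneg fun i _ => sq_nonneg _)]

lemma vnorm_mulVec_le (A : Matrix ι κ ℂ) (y : κ → ℂ) :
    vnorm (A *ᵥ y) ≤ spec A * vnorm y := by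
  have h := (LinearMap.toContinuousLinearMap (Matrix.toEuclideanLin A)).le_opNorm
    ((WithLp.equiv 2 (κ → ℂ)).symm y)
  rw [vnorm_eq, vnorm_eq]
  simpa [spec] using h

lemma spec_le {A : Matrix ι κ ℂ} {c : ℝ} (hc : 0 ≤ c)
    (h : ∀ y, vnorm (A *ᵥ y) ≤ c * vnorm y) : spec A ≤ c := by
  apply ContinuousLinearMap.opNorm_le_bound _ hc
  intro y
  have := h ((WithLp.equiv 2 (κ → ℂ)) y)
  rw [vnorm_eq, vnorm_eq] at this
  simpa [Matrix.toEuclideanLin_apply] using this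

lemma spec_nonneg (A : Matrix ι κ ℂ) : 0 ≤ spec A := norm_nonneg _

lemma spec_add_le (A B : Matrix ι κ ℂ) : spec (A + B) ≤ spec A + spec B := by
  unfold spec
  rw [map_add, map_add]
  exact norm_add_le _ _

lemma spec_smul (c : ℂ) (A : Matrix ι κ ℂ) : spec (c • A) = ‖c‖ * spec A := by
  unfold spec
  rw [_root_.map_smul, _root_.map_smul]
  exact norm_smul c (LinearMap.toContinuousLinearMap (Matrix.toEuclideanLin A))

lemma dot_abs_le (v w : ι → ℂ) : ‖star v ⬝ᵥ w‖ ≤ vnorm v * vnorm w := by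
  have := norm_inner_le_norm (𝕜 := ℂ) ((WithLp.equiv 2 (ι → ℂ)).symm v)
    ((WithLp.equiv 2 (ι → ℂ)).symm w)
  rw [show inner ℂ ((WithLp.equiv 2 (ι → ℂ)).symm v) ((WithLp.equiv 2 (ι → ℂ)).symm w) = star v ⬝ᵥ w by rw [dotProduct_comm]; rfl] at this
  rw [vnorm_eq, vnorm_eq]
  exact this

lemma vecMulVec_mulVec' (u : ι → ℂ) (v w : κ → ℂ) :
    Matrix.vecMulVec u v *ᵥ w = (v ⬝ᵥ w) • u := by
  ext i
  simp only [Matrix.mulVec, Matrix.vecMulVec_apply, dotProduct, Pi.smul_apply, smul_eq_mul,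
    Finset.mul_sum]
  rw [Finset.sum_mul]
  exact Finset.sum_congr rfl fun j _ => by ring

lemma spec_vecMulVec_le (u : ι → ℂ) (v : κ → ℂ) :
    spec (Matrix.vecMulVec u (star v)) ≤ vnorm u * vnorm v := by
  refine spec_le (mul_nonneg (vnorm_nonneg u) (vnorm_nonneg v)) fun w => ?_
  rw [vecMulVec_mulVec', vnorm_smul]
  calc ‖star v ⬝ᵥ w‖ * vnorm u ≤ (vnorm v * vnorm w) * vnorm u :=
        mul_le_mul_of_nonneg_right (dot_abs_le v w) (vnorm_nonneg u)
    _ = vnorm u * vnorm v * vnorm w := by ring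

/-- If AᴴA = 1 then mulVec by A preserves vnorm. -/
lemma vnorm_isometry {A : Matrix ι κ ℂ} (hA : Aᴴ * A = 1) (y : κ → ℂ) :
    vnorm (A *ᵥ y) = vnorm y := by
  have key : star (A *ᵥ y) ⬝ᵥ (A *ᵥ y) = star y ⬝ᵥ y := by
    rw [Matrix.star_mulVec, ← Matrix.dotProduct_mulVec, Matrix.mulVec_mulVec, hA, Matrix.one_mulVec]
  rw [dot_self_eq, dot_self_eq] at key
  have : (vnorm (A *ᵥ y)) ^ 2 = (vnorm y) ^ 2 := by
    exact_mod_cast key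
  nlinarith [vnorm_nonneg (A *ᵥ y), vnorm_nonneg y]
end helpers

lemma coeffM {a sM sD sK t : ℝ} (ha : 0 < a) :
    1 / (3 * a ^ 2) * ((a ^ 2 * sM + a * sD + sK) * t)
      = 1 / 3 * (sM + sD / a + sK / a ^ 2) * t := by
  have h : a ≠ 0 := ha.ne'
  field_simp
  try tauto

lemma coeffD {a sM sD sK t : ℝ} (ha : 0 < a) :
    1 / (3 * a) * ((a ^ 2 * sM + a * sD + sK) * t)
      = 1 / 3 * (a * sM + sD + sK / a) * t := by
  have h : a ≠ 0 := ha.ne'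
  field_simp
  try tauto

theorem stmt3 {n m : ℕ} (M D K : Matrix (Fin n) (Fin n) ℂ)
    (Q : Matrix (Fin n) (Fin m) ℂ) (Qp : Matrix (Fin n) (Fin (n - m)) ℂ)
    (hQ : Qᴴ * Q = 1)
    (hU1 : (Matrix.fromCols Q Qp)ᴴ * Matrix.fromCols Q Qp = 1)
    (hU2 : Matrix.fromCols Q Qp * (Matrix.fromCols Q Qp)ᴴ = 1)
    (lam : ℂ) (x : Fin n → ℂ) (hx : vnorm x = 1) (hlam : lam ≠ 0)
    (heig : (lam ^ 2 • M + lam • D + K) *ᵥ x = 0)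
    (hq : Qᴴ *ᵥ x ≠ 0) :
    ∃ EM ED EK : Matrix (Fin m) (Fin m) ℂ,
      spec EM ≤ (1 / 3) * (spec M + spec D / ‖lam‖ +
          spec K / ‖lam‖ ^ 2) * (vnorm (Qpᴴ *ᵥ x) / vnorm (Qᴴ *ᵥ x)) ∧
      spec ED ≤ (1 / 3) * (‖lam‖ * spec M + spec D +
          spec K / ‖lam‖) * (vnorm (Qpᴴ *ᵥ x) / vnorm (Qᴴ *ᵥ x)) ∧
      spec EK ≤ (1 / 3) * (‖lam‖ ^ 2 * spec M + ‖lam‖ * spec D +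
          spec K) * (vnorm (Qpᴴ *ᵥ x) / vnorm (Qᴴ *ᵥ x)) ∧
      (lam ^ 2 • (Qᴴ * M * Q + EM) + lam • (Qᴴ * D * Q + ED) + (Qᴴ * K * Q + EK)) *ᵥ
        ((vnorm (Qᴴ *ᵥ x))⁻¹ • (Qᴴ *ᵥ x)) = 0 := by
  classical
  set a : ℝ := ‖lam‖ with ha
  have hapos : 0 < a := by
    simpa [ha] using (norm_pos_iff.mpr hlam)
  set P : Matrix (Fin n) (Fin n) ℂ := lam ^ 2 • M + lam • D + K with hP
  set q : Fin m → ℂ := Qᴴ *ᵥ x with hqdef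
  set z : Fin (n - m) → ℂ := Qpᴴ *ᵥ x with hzdef
  have hqpos : 0 < vnorm q := vnorm_pos hq
  -- real smul equals complex smul
  have hsmr : (vnorm q)⁻¹ • q = (((vnorm q)⁻¹ : ℝ) : ℂ) • q := by
    ext i; simp [Complex.real_smul]
  set qh : Fin m → ℂ := (((vnorm q)⁻¹ : ℝ) : ℂ) • q with hqhdef
  have hqh1 : vnorm qh = 1 := by
    rw [hqhdef, vnorm_smul]
    simp only [Complex.norm_real, Real.norm_eq_abs, abs_of_pos (inv_pos.mpr hqpos)]
    exact inv_mul_cancel₀ hqpos.ne'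
  -- block decompositions
  have hQQ : Q * Qᴴ + Qp * Qpᴴ = 1 := by
    rw [Matrix.conjTranspose_fromCols_eq_fromRows_conjTranspose,
      Matrix.fromCols_mul_fromRows] at hU2
    exact hU2
  have hQpQp : Qpᴴ * Qp = 1 := by
    rw [Matrix.conjTranspose_fromCols_eq_fromRows_conjTranspose,
      Matrix.fromRows_mul_fromCols, ← Matrix.fromBlocks_one] at hU1
    have h := congrArg Matrix.toBlocks₂₂ hU1
    rwa [Matrix.toBlocks_fromBlocks₂₂, Matrix.toBlocks_fromBlocks₂₂] at h
  -- contraction property of Qᴴ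
  have hcontr : ∀ w : Fin n → ℂ, vnorm (Qᴴ *ᵥ w) ≤ vnorm w := by
    intro w
    have key : star (Qᴴ *ᵥ w) ⬝ᵥ (Qᴴ *ᵥ w) + star (Qpᴴ *ᵥ w) ⬝ᵥ (Qpᴴ *ᵥ w)
        = star w ⬝ᵥ w := by
      rw [Matrix.star_mulVec, Matrix.star_mulVec, Matrix.conjTranspose_conjTranspose,
        Matrix.conjTranspose_conjTranspose, ← Matrix.dotProduct_mulVec,
        ← Matrix.dotProduct_mulVec, Matrix.mulVec_mulVec, Matrix.mulVec_mulVec,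
        ← dotProduct_add, ← Matrix.add_mulVec, hQQ, Matrix.one_mulVec]
    rw [dot_self_eq, dot_self_eq, dot_self_eq] at key
    have key2 : (vnorm (Qᴴ *ᵥ w)) ^ 2 + (vnorm (Qpᴴ *ᵥ w)) ^ 2 = (vnorm w) ^ 2 := by
      exact_mod_cast key
    nlinarith [vnorm_nonneg (Qᴴ *ᵥ w), vnorm_nonneg w, sq_nonneg (vnorm (Qpᴴ *ᵥ w))]
  -- residual identity
  have hxdec : Q *ᵥ q = x - Qp *ᵥ z := by
    rw [hqdef, hzdef, Matrix.mulVec_mulVec, Matrix.mulVec_mulVec]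
    have h1 : Q * Qᴴ = 1 - Qp * Qpᴴ := by rw [← hQQ]; abel
    rw [h1, Matrix.sub_mulVec, Matrix.one_mulVec]
  have hres : (Qᴴ * P * Q) *ᵥ q = -(Qᴴ *ᵥ (P *ᵥ (Qp *ᵥ z))) := by
    rw [← Matrix.mulVec_mulVec, ← Matrix.mulVec_mulVec, hxdec, Matrix.mulVec_sub, heig,
      zero_sub, Matrix.mulVec_neg]
  set r : Fin m → ℂ := (Qᴴ * P * Q) *ᵥ qh with hrdef
  have hrnorm : vnorm r ≤ spec P * (vnorm z / vnorm q) := by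
    have h1 : r = (((vnorm q)⁻¹ : ℝ) : ℂ) • ((Qᴴ * P * Q) *ᵥ q) := by
      rw [hrdef, hqhdef, Matrix.mulVec_smul]
    rw [h1, vnorm_smul, hres, vnorm_neg]
    have h2 : vnorm (Qᴴ *ᵥ (P *ᵥ (Qp *ᵥ z))) ≤ spec P * vnorm z := by
      calc vnorm (Qᴴ *ᵥ (P *ᵥ (Qp *ᵥ z))) ≤ vnorm (P *ᵥ (Qp *ᵥ z)) := hcontr _
        _ ≤ spec P * vnorm (Qp *ᵥ z) := vnorm_mulVec_le _ _
        _ = spec P * vnorm z := by rw [vnorm_isometry hQpQp]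
    have h3 : ‖(((vnorm q)⁻¹ : ℝ) : ℂ)‖ = (vnorm q)⁻¹ := by
      rw [Complex.norm_real, Real.norm_eq_abs, abs_of_pos (inv_pos.mpr hqpos)]
    rw [h3]
    calc (vnorm q)⁻¹ * vnorm (Qᴴ *ᵥ P *ᵥ Qp *ᵥ z) ≤ (vnorm q)⁻¹ * (spec P * vnorm z) :=
          mul_le_mul_of_nonneg_left h2 (le_of_lt (inv_pos.mpr hqpos))
      _ = spec P * (vnorm z / vnorm q) := by rw [div_eq_mul_inv]; ring
  have hspecP : spec P ≤ a ^ 2 * spec M + a * spec D + spec K := by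
    calc spec P ≤ spec (lam ^ 2 • M + lam • D) + spec K := spec_add_le _ _
      _ ≤ spec (lam ^ 2 • M) + spec (lam • D) + spec K := by
          linarith [spec_add_le (lam ^ 2 • M) (lam • D)]
      _ = a ^ 2 * spec M + a * spec D + spec K := by
          rw [spec_smul, spec_smul, norm_pow, ha]
  set t : ℝ := vnorm z / vnorm q with htdef
  have ht0 : 0 ≤ t := div_nonneg (vnorm_nonneg z) (vnorm_nonneg q)
  have hrbound : vnorm r ≤ (a ^ 2 * spec M + a * spec D + spec K) * t := by
    calc vnorm r ≤ spec P * t := hrnorm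
      _ ≤ (a ^ 2 * spec M + a * spec D + spec K) * t :=
          mul_le_mul_of_nonneg_right hspecP ht0
  set N : Matrix (Fin m) (Fin m) ℂ := Matrix.vecMulVec r (star qh) with hNdef
  have hNspec : spec N ≤ vnorm r := by
    have := spec_vecMulVec_le r qh
    rwa [hqh1, mul_one] at this
  refine ⟨(-(1 / (3 * lam ^ 2))) • N, (-(1 / (3 * lam))) • N, (-(1 / 3 : ℂ)) • N, ?_, ?_, ?_, ?_⟩
  · rw [spec_smul]
    have hn : ‖(-(1 / (3 * lam ^ 2)) : ℂ)‖ = 1 / (3 * a ^ 2) := by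
      rw [norm_neg, norm_div, norm_one, norm_mul, norm_pow]
      norm_num [ha]
    rw [hn]
    calc 1 / (3 * a ^ 2) * spec N ≤ 1 / (3 * a ^ 2) * ((a ^ 2 * spec M + a * spec D + spec K) * t) := by
          apply mul_le_mul_of_nonneg_left (le_trans hNspec hrbound)
          positivity
      _ = 1 / 3 * (spec M + spec D / a + spec K / a ^ 2) * t :=
          coeffM hapos
  · rw [spec_smul]
    have hn : ‖(-(1 / (3 * lam)) : ℂ)‖ = 1 / (3 * a) := by
      rw [norm_neg, norm_div, norm_one, norm_mul]
      norm_num [ha]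
    rw [hn]
    calc 1 / (3 * a) * spec N ≤ 1 / (3 * a) * ((a ^ 2 * spec M + a * spec D + spec K) * t) := by
          apply mul_le_mul_of_nonneg_left (le_trans hNspec hrbound)
          positivity
      _ = 1 / 3 * (a * spec M + spec D + spec K / a) * t :=
          coeffD hapos
  · rw [spec_smul]
    have hn : ‖(-(1 / 3 : ℂ))‖ = 1 / 3 := by
      simp [norm_div]
    rw [hn]
    calc 1 / 3 * spec N ≤ 1 / 3 * ((a ^ 2 * spec M + a * spec D + spec K) * t) := by
          apply mul_le_mul_of_nonneg_left (le_trans hNspec hrbound)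
          norm_num
      _ = 1 / 3 * (a ^ 2 * spec M + a * spec D + spec K) * t := by ring
  · rw [hsmr]
    have h3 : lam ^ 2 • ((-(1 / (3 * lam ^ 2))) • N) = (-(1 / 3 : ℂ)) • N := by
      rw [smul_smul]; congr 1; field_simp [hlam]
    have h4 : lam • ((-(1 / (3 * lam))) • N) = (-(1 / 3 : ℂ)) • N := by
      rw [smul_smul]; congr 1; field_simp [hlam]
    have hA : lam ^ 2 • (Qᴴ * M * Q + (-(1 / (3 * lam ^ 2))) • N)
        + lam • (Qᴴ * D * Q + (-(1 / (3 * lam))) • N)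
        + (Qᴴ * K * Q + (-(1 / 3 : ℂ)) • N) = Qᴴ * P * Q - N := by
      rw [smul_add, smul_add, h3, h4, hP]
      simp only [Matrix.mul_add, Matrix.add_mul, Matrix.mul_smul, Matrix.smul_mul]
      module
    rw [hA, Matrix.sub_mulVec, ← hrdef]
    have hNq : N *ᵥ qh = r := by
      rw [hNdef, vecMulVec_mulVec', dot_self_eq, hqh1]
      norm_num
    rw [hNq, sub_self]
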